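/- Let V(s) = e^{−3Hs} √(det g(s)) where g(s) is a C¹ family of positive-definite matrices satisfying ∂_s g = 2 Φ g k with Φ tr_g k := Φ g^{ij} k_{ij} satisfying |Φ tr_g k − 3H| ≤ C e^{−Hs}. Then ∂_s V = (Φ tr_g k − 3H) V, and consequently V(s)/V(s0) ∈ [e^{−(C/H) e^{−Hs0}}, e^{(C/H) e^{−Hs0}}] for all s ≥ s0; in particular V is bounded above and below by positive constants uniformly in s. -/

import Mathlib

open Real Set Finset

lemma jacobi3 (A : ℝ → Matrix (Fin 3) (Fin 3) ℝ) (A' : Matrix (Fin 3) (Fin 3) ℝ) (s : ℝ)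
    (h : ∀ i j, HasDerivAt (fun τ => A τ i j) (A' i j) s) :
    HasDerivAt (fun τ => (A τ).det) (∑ i, ∑ j, (A s).adjugate j i * A' i j) s := by
  have key := (((((((h 0 0).mul (h 1 1)).mul (h 2 2)).sub
      (((h 0 0).mul (h 1 2)).mul (h 2 1))).sub
      (((h 0 1).mul (h 1 0)).mul (h 2 2))).add
      (((h 0 1).mul (h 1 2)).mul (h 2 0))).add
      (((h 0 2).mul (h 1 0)).mul (h 2 1))).sub
      (((h 0 2).mul (h 1 1)).mul (h 2 0))
  have hf : (fun τ => (A τ).det) = (fun τ =>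
      A τ 0 0 * A τ 1 1 * A τ 2 2 - A τ 0 0 * A τ 1 2 * A τ 2 1
      - A τ 0 1 * A τ 1 0 * A τ 2 2 + A τ 0 1 * A τ 1 2 * A τ 2 0
      + A τ 0 2 * A τ 1 0 * A τ 2 1 - A τ 0 2 * A τ 1 1 * A τ 2 0) := by
    funext τ; rw [Matrix.det_fin_three]
  rw [hf]
  refine HasDerivAt.congr_deriv key ?_
  simp [Matrix.adjugate_fin_three, Fin.sum_univ_three]
  ring

/-- Renormalized volume form estimate: with `V(s) = e^{-3Hs} √(det g(s))`,
`∂_s g_{ij} = 2Φ k_{ij}` and `|Φ tr_g k - 3H| ≤ C e^{-Hs}`, one has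
`∂_s V = (Φ tr_g k - 3H) V`, and hence
`V(s)/V(s0) ∈ [e^{-(C/H) e^{-Hs0}}, e^{(C/H) e^{-Hs0}}]` for `s ≥ s0`;
in particular `V` is uniformly bounded above and below. -/
theorem stmt_17 (H C s0 : ℝ) (hH : 0 < H)
    (g k ginv : ℝ → Matrix (Fin 3) (Fin 3) ℝ) (Φ : ℝ → ℝ)
    (hpos : ∀ s, (g s).PosDef)
    (hinv : ∀ s, g s * ginv s = 1)
    (hderiv : ∀ s i j, HasDerivAt (fun τ => g τ i j) (2 * Φ s * k s i j) s)
    (htr : ∀ s, |Φ s * (∑ i, ∑ j, ginv s i j * k s i j) - 3 * H|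
      ≤ C * exp (-H * s)) :
    (∀ s, HasDerivAt (fun τ => exp (-3 * H * τ) * Real.sqrt (g τ).det)
      ((Φ s * (∑ i, ∑ j, ginv s i j * k s i j) - 3 * H)
        * (exp (-3 * H * s) * Real.sqrt (g s).det)) s) ∧
    (∀ s ≥ s0,
      (exp (-3 * H * s) * Real.sqrt (g s).det)
          / (exp (-3 * H * s0) * Real.sqrt (g s0).det)
        ∈ Icc (exp (-(C / H) * exp (-H * s0))) (exp ((C / H) * exp (-H * s0)))) := by
  set T : ℝ → ℝ := fun s => ∑ i, ∑ j, ginv s i j * k s i j with hT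
  have hdet_pos : ∀ s, 0 < (g s).det := fun s => (hpos s).det_pos
  have hginv : ∀ s, ginv s = (g s)⁻¹ := fun s => (Matrix.inv_eq_right_inv (hinv s)).symm
  have hadj : ∀ s i j, (g s).adjugate i j = (g s).det * ginv s i j := by
    intro s i j
    have h1 : ginv s i j = ((g s).det)⁻¹ * (g s).adjugate i j := by
      rw [hginv s, Matrix.inv_def]
      simp [Ring.inverse_eq_inv', Matrix.smul_apply, smul_eq_mul]
    rw [h1, ← mul_assoc, mul_inv_cancel₀ (ne_of_gt (hdet_pos s)), one_mul]
  have hsym : ∀ s, (g s).transpose = g s := by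
    intro s
    have := (hpos s).1
    simpa [Matrix.IsHermitian] using this
  have hginvsym : ∀ s i j, ginv s j i = ginv s i j := by
    intro s i j
    have h1 : ((g s)⁻¹).transpose = (g s)⁻¹ := by
      rw [Matrix.transpose_nonsing_inv, hsym s]
    rw [hginv s]
    conv_rhs => rw [← h1]
    rfl
  -- derivative of det (Jacobi's formula)
  have hdet : ∀ s, HasDerivAt (fun τ => (g τ).det)
      ((g s).det * (2 * Φ s * T s)) s := by
    intro s
    have hjac := jacobi3 g ((2 * Φ s) • k s) s (by
      intro i j
      simpa [Matrix.smul_apply, smul_eq_mul, mul_assoc] using hderiv s i j)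
    convert hjac using 1
    simp only [hT, Matrix.smul_apply, smul_eq_mul, Fin.sum_univ_three, hadj]
    rw [hginvsym s 0 1, hginvsym s 0 2, hginvsym s 1 2]
    ring
  have hV : ∀ s, HasDerivAt (fun τ => exp (-3 * H * τ) * Real.sqrt (g τ).det)
      ((Φ s * T s - 3 * H) * (exp (-3 * H * s) * Real.sqrt (g s).det)) s := by
    intro s
    have hsq : HasDerivAt (fun τ => Real.sqrt (g τ).det)
        (1 / (2 * Real.sqrt (g s).det) * ((g s).det * (2 * Φ s * T s))) s :=
      (Real.hasDerivAt_sqrt (ne_of_gt (hdet_pos s))).comp s (hdet s)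
    have hexp : HasDerivAt (fun τ => exp (-3 * H * τ)) (exp (-3 * H * s) * (-3 * H)) s := by
      simpa using (((hasDerivAt_id s).const_mul (-3 * H)).exp)
    have hprod := hexp.mul hsq
    have hs0 : Real.sqrt (g s).det ≠ 0 := ne_of_gt (Real.sqrt_pos.2 (hdet_pos s))
    have hmul : Real.sqrt (g s).det * Real.sqrt (g s).det = (g s).det :=
      Real.mul_self_sqrt (le_of_lt (hdet_pos s))
    have key : 1 / (2 * Real.sqrt (g s).det) * ((g s).det * (2 * Φ s * T s))
        = Φ s * T s * Real.sqrt (g s).det := by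
      field_simp; rw [sq_sqrt (le_of_lt (hdet_pos s))]
    rw [key] at hprod
    refine HasDerivAt.congr_deriv hprod ?_
    ring
  refine ⟨hV, ?_⟩
  -- part 2
  have hVpos : ∀ s, 0 < exp (-3 * H * s) * Real.sqrt (g s).det := fun s =>
    mul_pos (exp_pos _) (Real.sqrt_pos.2 (hdet_pos s))
  have huderiv : ∀ s, HasDerivAt
      (fun τ => Real.log (exp (-3 * H * τ) * Real.sqrt (g τ).det))
      (Φ s * T s - 3 * H) s := by
    intro s
    have h := (hV s).log (ne_of_gt (hVpos s))
    rw [mul_div_assoc, div_self (ne_of_gt (hVpos s)), mul_one] at h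
    exact h
  have hC : 0 ≤ C := by
    have h0 := (abs_nonneg _).trans (htr 0)
    simpa using h0
  have hEderiv : ∀ s, HasDerivAt (fun τ => C / H * exp (-H * τ))
      (-(C * exp (-H * s))) s := by
    intro s
    have := (((hasDerivAt_id s).const_mul (-H)).exp).const_mul (C / H)
    refine HasDerivAt.congr_deriv this ?_
    simp only [id]
    field_simp
  have hanti : Antitone (fun s => Real.log (exp (-3 * H * s) * Real.sqrt (g s).det)
      + C / H * exp (-H * s)) := by
    apply antitone_of_deriv_nonpos
    · intro s
      exact ((huderiv s).add (hEderiv s)).differentiableAt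
    · intro s
      erw [((huderiv s).add (hEderiv s)).deriv]
      have := (abs_le.1 (htr s)).2
      simp only [hT] at this ⊢
      linarith
  have hmono : Monotone (fun s => Real.log (exp (-3 * H * s) * Real.sqrt (g s).det)
      - C / H * exp (-H * s)) := by
    apply monotone_of_deriv_nonneg
    · intro s
      exact ((huderiv s).sub (hEderiv s)).differentiableAt
    · intro s
      erw [((huderiv s).sub (hEderiv s)).deriv]
      have := (abs_le.1 (htr s)).1
      simp only [hT] at this ⊢
      linarith
  intro s hs
  have h1 := hanti hs
  have h2 := hmono hs
  simp only at h1 h2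
  have hexp_nonneg : ∀ t : ℝ, 0 ≤ C / H * exp (-H * t) := fun t =>
    mul_nonneg (div_nonneg hC (le_of_lt hH)) (le_of_lt (exp_pos _))
  have hub : Real.log (exp (-3 * H * s) * Real.sqrt (g s).det)
      - Real.log (exp (-3 * H * s0) * Real.sqrt (g s0).det) ≤ C / H * exp (-H * s0) := by
    have := hexp_nonneg s
    linarith
  have hlb : -(C / H * exp (-H * s0)) ≤ Real.log (exp (-3 * H * s) * Real.sqrt (g s).det)
      - Real.log (exp (-3 * H * s0) * Real.sqrt (g s0).det) := by
    have := hexp_nonneg s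
    linarith
  have hratio : (exp (-3 * H * s) * Real.sqrt (g s).det)
      / (exp (-3 * H * s0) * Real.sqrt (g s0).det)
      = exp (Real.log (exp (-3 * H * s) * Real.sqrt (g s).det)
        - Real.log (exp (-3 * H * s0) * Real.sqrt (g s0).det)) := by
    rw [Real.exp_sub, Real.exp_log (hVpos s), Real.exp_log (hVpos s0)]
  rw [Set.mem_Icc, hratio]
  constructor
  · apply exp_le_exp.2
    linarith
  · exact exp_le_exp.2 hub
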